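/- Let p be a prime, q ≥ 1 a natural number, and k a natural number with 1 < k < p and k ^ (p - 1) not congruent to 1 modulo p². Let x', y', r, s be natural numbers with p ∤ x', p ∤ y', x' * p ^ r < p ^ q, and y' * p ^ s < p ^ q. Then there exists l : ℕ with (↑(x' * p ^ r) : ZMod (p ^ q)) = (k : ZMod (p ^ q)) ^ l * ↑(y' * p ^ s) if and only if r = s and there exists l : ℕ with (↑x' : ZMod p) = (k : ZMod p) ^ l * ↑y'. -/

import Mathlib

open Subgroup in
/-- LTE consequence: `p^(j+2)` does not divide `k^((p-1)*p^j) - 1`. -/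
lemma lte_aux (p k : ℕ) (hp : p.Prime) (hp1 : Odd p) (hpk : ¬ p ∣ k)
    (hw : ¬ (k ^ (p - 1) ≡ 1 [MOD p ^ 2])) (j : ℕ) :
    ¬ ((p : ℤ) ^ (j + 2) ∣ (k : ℤ) ^ ((p - 1) * p ^ j) - 1) := by
  intro hdvd
  have hco : Nat.Coprime k p := (hp.coprime_iff_not_dvd.mpr hpk).symm
  have hfer : (p : ℤ) ∣ (k : ℤ) ^ (p - 1) - 1 := by
    have h1 : k ^ (p - 1) ≡ 1 [MOD p] := by
      have := Nat.ModEq.pow_totient hco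
      rwa [Nat.totient_prime hp] at this
    have h2 := (dvd_neg (α := ℤ)).mpr ((Nat.modEq_iff_dvd).mp h1)
    rw [neg_sub] at h2
    push_cast at h2
    exact h2
  have hx : ¬ (p : ℤ) ∣ (k : ℤ) ^ (p - 1) := by
    intro h
    have := Int.Prime.dvd_pow' hp h
    exact hpk (by exact_mod_cast this)
  have h1 : emultiplicity ((p : ℤ)) ((k : ℤ) ^ (p - 1) - 1) < ((2 : ℕ) : ℕ∞) := by
    rw [emultiplicity_lt_iff_not_dvd]
    intro h
    apply hw
    rw [Nat.modEq_iff_dvd]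
    have h' := (dvd_neg (α := ℤ)).mpr h
    rw [neg_sub] at h'
    push_cast
    exact h'
  have hLTE := Int.emultiplicity_pow_sub_pow hp hp1 (by simpa using hfer) hx (p ^ j)
  rw [one_pow, ← pow_mul] at hLTE
  have h2 : emultiplicity p (p ^ j : ℕ) = (j : ℕ∞) :=
    emultiplicity_pow_self_of_prime hp.prime j
  have hge : ((j + 2 : ℕ) : ℕ∞) ≤ emultiplicity (p : ℤ) ((k : ℤ) ^ ((p - 1) * p ^ j) - 1) :=
    le_emultiplicity_of_pow_dvd hdvd
  rw [hLTE, h2] at hge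
  have hlt : emultiplicity ((p : ℤ)) ((k : ℤ) ^ (p - 1) - 1) + (j : ℕ∞)
      < ((2 : ℕ) : ℕ∞) + (j : ℕ∞) :=
    WithTop.add_lt_add_right (by exact_mod_cast WithTop.coe_ne_top) h1
  have : ((j + 2 : ℕ) : ℕ∞) = ((2 : ℕ) : ℕ∞) + (j : ℕ∞) := by
    push_cast; rw [add_comm]
  rw [this] at hge
  exact absurd hge (not_le.mpr hlt)

/-- Lifting lemma: a relation `x ≡ k^l * y` mod `p` lifts to mod `p^m`. -/
lemma key_lift (p k m : ℕ) (hp : p.Prime) (hk1 : 1 < k) (hkp : k < p)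
    (hw : ¬ (k ^ (p - 1) ≡ 1 [MOD p ^ 2])) (hm : 1 ≤ m)
    (x y : ℕ) (hx : ¬ p ∣ x) (hy : ¬ p ∣ y) (l₀ : ℕ)
    (h : (x : ZMod p) = (k : ZMod p) ^ l₀ * (y : ZMod p)) :
    ∃ l : ℕ, (x : ZMod (p ^ m)) = (k : ZMod (p ^ m)) ^ l * (y : ZMod (p ^ m)) := by
  haveI : Fact p.Prime := ⟨hp⟩
  haveI : NeZero (p ^ m) := ⟨pow_ne_zero _ hp.pos.ne'⟩
  have hp3 : 3 ≤ p := by omega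
  have hp1 : Odd p := hp.odd_of_ne_two (by omega)
  have hpk : ¬ p ∣ k := fun hd => absurd (Nat.le_of_dvd (by omega) hd) (by omega)
  have hcopk : Nat.Coprime k (p ^ m) :=
    Nat.Coprime.pow_right _ ((hp.coprime_iff_not_dvd.mpr hpk).symm)
  have hcopx : Nat.Coprime x (p ^ m) :=
    Nat.Coprime.pow_right _ ((hp.coprime_iff_not_dvd.mpr hx).symm)
  have hcopy : Nat.Coprime y (p ^ m) :=
    Nat.Coprime.pow_right _ ((hp.coprime_iff_not_dvd.mpr hy).symm)
  set u : (ZMod (p ^ m))ˣ := ZMod.unitOfCoprime k hcopk with hu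
  set ux : (ZMod (p ^ m))ˣ := ZMod.unitOfCoprime x hcopx with hux
  set uy : (ZMod (p ^ m))ˣ := ZMod.unitOfCoprime y hcopy with huy
  have hdv : p ∣ p ^ m := dvd_pow_self p (by omega)
  set φ : (ZMod (p ^ m))ˣ →* (ZMod p)ˣ := ZMod.unitsMap hdv with hφ
  -- coercion facts
  have hval : ∀ w : (ZMod (p ^ m))ˣ, ((φ w : (ZMod p)ˣ) : ZMod p)
      = ZMod.castHom hdv (ZMod p) (w : ZMod (p ^ m)) := fun w => rfl
  have hcardG : Nat.card (ZMod (p ^ m))ˣ = p ^ (m - 1) * (p - 1) := by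
    rw [Nat.card_eq_fintype_card, ZMod.card_units_eq_totient, Nat.totient_prime_pow hp hm]
  -- order of u^(p-1) is p^(m-1)
  have hupow : (u ^ (p - 1)) ^ (p ^ (m - 1)) = 1 := by
    have hc : Fintype.card (ZMod (p ^ m))ˣ = p ^ (m - 1) * (p - 1) := by
      rw [ZMod.card_units_eq_totient, Nat.totient_prime_pow hp hm]
    rw [← pow_mul, mul_comm, ← hc]
    exact pow_card_eq_one
  have hord_dvd : orderOf (u ^ (p - 1)) ∣ p ^ (m - 1) := orderOf_dvd_of_pow_eq_one hupow
  have hord : orderOf (u ^ (p - 1)) = p ^ (m - 1) := by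
    obtain ⟨a, ha, hoa⟩ := (Nat.dvd_prime_pow hp).mp hord_dvd
    by_cases hcase : a = m - 1
    · rw [hoa, hcase]
    · exfalso
      have ham : a ≤ m - 2 := by omega
      have hm2 : 2 ≤ m := by omega
      have hone : (u ^ (p - 1)) ^ (p ^ (m - 2)) = 1 := by
        have : orderOf (u ^ (p - 1)) ∣ p ^ (m - 2) := hoa ▸ pow_dvd_pow p ham
        exact orderOf_dvd_iff_pow_eq_one.mp this
      have hzm : (k : ZMod (p ^ m)) ^ ((p - 1) * p ^ (m - 2)) = 1 := by
        have := congrArg (Units.val) hone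
        rw [← pow_mul] at this
        simpa [hu, ZMod.coe_unitOfCoprime] using this
      have hmod : k ^ ((p - 1) * p ^ (m - 2)) ≡ 1 [MOD p ^ m] := by
        have : ((k ^ ((p - 1) * p ^ (m - 2)) : ℕ) : ZMod (p ^ m)) = ((1 : ℕ) : ZMod (p ^ m)) := by
          push_cast
          exact hzm
        exact (ZMod.natCast_eq_natCast_iff _ _ _).mp this
      have hdvd : (p : ℤ) ^ (m - 2 + 2) ∣ (k : ℤ) ^ ((p - 1) * p ^ (m - 2)) - 1 := by
        have h' := (dvd_neg (α := ℤ)).mpr ((Nat.modEq_iff_dvd).mp hmod)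
        rw [neg_sub] at h'
        push_cast at h'
        have h2 : (m - 2) + 2 = m := by omega
        rw [h2]
        exact h'
      exact lte_aux p k hp hp1 hpk hw (m - 2) hdvd
  -- the kernel of φ has cardinality p^(m-1)
  have hsurj : Function.Surjective φ := ZMod.unitsMap_surjective hdv
  have hquot : Nat.card ((ZMod (p ^ m))ˣ ⧸ φ.ker) = p - 1 := by
    rw [Nat.card_congr (QuotientGroup.quotientKerEquivOfSurjective φ hsurj).toEquiv,
      Nat.card_eq_fintype_card, ZMod.card_units_eq_totient, Nat.totient_prime hp]
  have hker_card : Nat.card φ.ker = p ^ (m - 1) := by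
    have h := Subgroup.card_eq_card_quotient_mul_card_subgroup φ.ker
    rw [hcardG, hquot] at h
    have hp1' : 0 < p - 1 := by omega
    have : (p - 1) * p ^ (m - 1) = (p - 1) * Nat.card φ.ker := by
      rw [mul_comm (p-1) (p ^ (m-1)), ← h]
    exact (Nat.eq_of_mul_eq_mul_left hp1' this).symm
  -- u^(p-1) is in the kernel
  have hkmem : u ^ (p - 1) ∈ φ.ker := by
    rw [MonoidHom.mem_ker, map_pow]
    have hvalu : ((φ u : (ZMod p)ˣ) : ZMod p) = (k : ZMod p) := by
      rw [hval, hu, ZMod.coe_unitOfCoprime, map_natCast]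
    have hknz : (k : ZMod p) ≠ 0 := by
      rw [Ne, ZMod.natCast_eq_zero_iff]
      exact hpk
    ext
    rw [Units.val_pow_eq_pow_val, hvalu, Units.val_one]
    exact ZMod.pow_card_sub_one_eq_one hknz
  -- hence the kernel equals zpowers (u^(p-1))
  have hgen : Subgroup.zpowers (u ^ (p - 1)) = φ.ker := by
    apply Subgroup.eq_of_le_of_card_ge (Subgroup.zpowers_le.mpr hkmem)
    rw [hker_card, Nat.card_zpowers, hord]
  -- φ ux = (φ u)^l₀ * φ uy
  have hφeq : φ ux = (φ u) ^ l₀ * φ uy := by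
    ext
    rw [Units.val_mul, Units.val_pow_eq_pow_val]
    simp only [hval]
    rw [hux, huy, hu]
    simp only [ZMod.coe_unitOfCoprime, map_natCast]
    exact h
  have hcmem : ux * (u ^ l₀ * uy)⁻¹ ∈ φ.ker := by
    rw [MonoidHom.mem_ker, map_mul, map_inv, map_mul, map_pow, hφeq]
    group
  rw [← hgen] at hcmem
  obtain ⟨j, hj⟩ := Subgroup.mem_zpowers_iff.mp hcmem
  -- ux = u ^ ((p-1)*j + l₀) * uy  (zpow)
  have hux_eq : ux = u ^ (((p : ℤ) - 1) * j + l₀) * uy := by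
    have hpint : ((p - 1 : ℕ) : ℤ) = (p : ℤ) - 1 := by
      have : 1 ≤ p := hp.one_lt.le
      push_cast [this]; ring
    have : (u ^ (p - 1)) ^ j = u ^ (((p : ℤ) - 1) * j) := by
      rw [← zpow_natCast u (p - 1), ← zpow_mul, hpint]
    rw [zpow_add, ← this, hj, zpow_natCast]
    group
  have hmem : u ^ (((p : ℤ) - 1) * j + l₀) ∈ Submonoid.powers u :=
    mem_powers_iff_mem_zpowers.mpr (zpow_mem (Subgroup.mem_zpowers u) _)
  obtain ⟨l, hl⟩ := hmem
  refine ⟨l, ?_⟩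
  have := congrArg Units.val (hux_eq.trans (by rw [← hl]))
  simpa [hux, huy, hu, ZMod.coe_unitOfCoprime] using this

theorem stmt14 (p q k : ℕ) (hp : p.Prime) (hq : 1 ≤ q) (hk1 : 1 < k) (hkp : k < p)
    (hw : ¬ (k ^ (p - 1) ≡ 1 [MOD p ^ 2]))
    (x' y' r s : ℕ) (hx' : ¬ p ∣ x') (hy' : ¬ p ∣ y')
    (hxr : x' * p ^ r < p ^ q) (hys : y' * p ^ s < p ^ q) :
    (∃ l : ℕ, ((x' * p ^ r : ℕ) : ZMod (p ^ q))
        = (k : ZMod (p ^ q)) ^ l * ((y' * p ^ s : ℕ) : ZMod (p ^ q))) ↔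
      (r = s ∧ ∃ l : ℕ, ((x' : ℕ) : ZMod p) = (k : ZMod p) ^ l * ((y' : ℕ) : ZMod p)) := by
  haveI : Fact p.Prime := ⟨hp⟩
  have hx0 : x' ≠ 0 := by rintro rfl; exact hx' (dvd_zero p)
  have hy0 : y' ≠ 0 := by rintro rfl; exact hy' (dvd_zero p)
  have hpk : ¬ p ∣ k := fun hd => absurd (Nat.le_of_dvd (by omega) hd) (by omega)
  have hr : r < q := by
    have h1 : p ^ r ≤ x' * p ^ r := Nat.le_mul_of_pos_left _ (by omega)
    exact (Nat.pow_lt_pow_iff_right hp.one_lt).mp (lt_of_le_of_lt h1 hxr)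
  have hs : s < q := by
    have h1 : p ^ s ≤ y' * p ^ s := Nat.le_mul_of_pos_left _ (by omega)
    exact (Nat.pow_lt_pow_iff_right hp.one_lt).mp (lt_of_le_of_lt h1 hys)
  constructor
  · rintro ⟨l, hl⟩
    have hmod : x' * p ^ r ≡ k ^ l * (y' * p ^ s) [MOD p ^ q] := by
      apply (ZMod.natCast_eq_natCast_iff _ _ _).mp
      push_cast
      exact_mod_cast hl
    have hrs : r = s := by
      by_contra hne
      rcases Nat.lt_or_ge r s with hlt | hge
      · -- r < s
        have hrhs : p ^ (r + 1) ∣ k ^ l * (y' * p ^ s) :=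
          Dvd.dvd.mul_left (Dvd.dvd.mul_left (pow_dvd_pow p (by omega)) y') (k ^ l)
        have hdx : p ^ (r + 1) ∣ x' * p ^ r := by
          have h2 := (hmod.of_dvd (pow_dvd_pow p (show r + 1 ≤ q by omega))).trans
            ((Nat.modEq_zero_iff_dvd).mpr hrhs)
          exact (Nat.modEq_zero_iff_dvd).mp h2
        obtain ⟨c, hc⟩ := hdx
        apply hx'
        refine ⟨c, Nat.eq_of_mul_eq_mul_right (pow_pos hp.pos r) ?_⟩
        rw [hc, pow_succ]
        ring
      · have hlt : s < r := by omega
        have hlhs : p ^ (s + 1) ∣ x' * p ^ r :=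
          Dvd.dvd.mul_left (pow_dvd_pow p (by omega)) x'
        have hdy : p ^ (s + 1) ∣ k ^ l * (y' * p ^ s) := by
          have h2 := (hmod.symm.of_dvd (pow_dvd_pow p (show s + 1 ≤ q by omega))).trans
            ((Nat.modEq_zero_iff_dvd).mpr hlhs)
          exact (Nat.modEq_zero_iff_dvd).mp h2
        have hdy2 : p ∣ k ^ l * y' := by
          obtain ⟨c, hc⟩ := hdy
          refine ⟨c, Nat.eq_of_mul_eq_mul_right (pow_pos hp.pos s) ?_⟩
          rw [← mul_assoc] at hc
          rw [hc, pow_succ]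
          ring
        rcases (Nat.Prime.dvd_mul hp).mp hdy2 with h3 | h3
        · exact hpk (hp.dvd_of_dvd_pow h3)
        · exact hy' h3
    subst hrs
    refine ⟨rfl, l, ?_⟩
    have hint := (Nat.modEq_iff_dvd).mp hmod
    push_cast at hint
    have h0 : (k : ℤ) ^ l * ((y' : ℤ) * (p : ℤ) ^ r) - (x' : ℤ) * (p : ℤ) ^ r
        = ((k : ℤ) ^ l * (y' : ℤ) - (x' : ℤ)) * (p : ℤ) ^ r := by ring
    rw [h0] at hint
    have h1 : (p : ℤ) ^ (q - r) * (p : ℤ) ^ r ∣ ((k : ℤ) ^ l * (y' : ℤ) - (x' : ℤ)) * (p : ℤ) ^ r := by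
      rw [← pow_add]
      have : q - r + r = q := by omega
      rw [this]
      exact hint
    have h2 : (p : ℤ) ^ (q - r) ∣ (k : ℤ) ^ l * (y' : ℤ) - (x' : ℤ) :=
      (mul_dvd_mul_iff_right (pow_ne_zero r (by exact_mod_cast hp.pos.ne' : (p : ℤ) ≠ 0))).mp h1
    have h3 : (p : ℤ) ∣ (k : ℤ) ^ l * (y' : ℤ) - (x' : ℤ) :=
      dvd_trans (dvd_pow_self (p : ℤ) (by omega : q - r ≠ 0)) h2
    have h4 : (((k : ℤ) ^ l * (y' : ℤ) - (x' : ℤ) : ℤ) : ZMod p) = 0 :=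
      (ZMod.intCast_zmod_eq_zero_iff_dvd _ _).mpr h3
    push_cast at h4
    have := sub_eq_zero.mp h4
    exact this.symm
  · rintro ⟨rfl, l₀, h0⟩
    obtain ⟨l, hl⟩ := key_lift p k (q - r) hp hk1 hkp hw (by omega) x' y' hx' hy' l₀ h0
    have hmod : x' ≡ k ^ l * y' [MOD p ^ (q - r)] := by
      apply (ZMod.natCast_eq_natCast_iff _ _ _).mp
      push_cast
      exact_mod_cast hl
    have hmod2 := hmod.mul_right' (p ^ r)
    have hq' : p ^ (q - r) * p ^ r = p ^ q := by
      rw [← pow_add]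
      congr 1
      omega
    rw [hq'] at hmod2
    refine ⟨l, ?_⟩
    have hz := (ZMod.natCast_eq_natCast_iff _ _ _).mpr hmod2
    push_cast at hz ⊢
    linear_combination hz
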